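/- Let p and q be distinct primes, let k be a positive integer such that p^(k−1) exactly divides q − 1 (i.e. p^(k−1) divides q − 1 but p^k does not), and let a be a positive integer. Then p divides σ(q^(2a)) if and only if there exists an odd integer f > 1 with q^f ≡ 1 (mod p^k) and the smallest such f divides 2a + 1. -/
import Mathlib

lemma one_add_pow_eq_one' {R : Type*} [CommRing R] (y : R) (n : ℕ)
    (h2 : y ^ 2 = 0) (hn : (n : R) * y = 0) : (1 + y) ^ n = 1 := by
  rw [add_pow, Finset.sum_eq_single n]
  · simp
  · intro k hk hkn
    rw [Finset.mem_range] at hk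
    have hklt : k < n := by omega
    rcases Nat.lt_or_ge k (n - 1) with h | h
    · have hy : y ^ (n - k) = 0 := by
        rw [show n - k = 2 + (n - k - 2) by omega, pow_add, h2, zero_mul]
      rw [hy, mul_zero, zero_mul]
    · have hk1 : k = n - 1 := by omega
      subst hk1
      rw [show n - (n - 1) = 1 by omega, pow_one, one_pow, one_mul]
      have hc : n.choose (n - 1) = n := by
        rw [Nat.choose_symm (by omega : 1 ≤ n), Nat.choose_one_right]
      rw [hc, mul_comm, hn]
  · intro h
    exact absurd (Finset.self_mem_range_succ n) h

/-- Let `p, q` be distinct primes with `p^(k-1) || q - 1` (`k ≥ 1`), and let `a ≥ 1`.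
Then `p ∣ σ(q^(2a))` iff there is an odd `f > 1` with `q^f ≡ 1 [MOD p^k]` whose
smallest instance divides `2a + 1`. -/
theorem prime_dvd_sigma_iff (p q k a : ℕ) (hp : p.Prime) (hq : q.Prime) (hpq : p ≠ q)
    (hk : 0 < k) (hdvd : p ^ (k - 1) ∣ q - 1) (hndvd : ¬ p ^ k ∣ q - 1) (ha : 0 < a) :
    p ∣ (ArithmeticFunction.sigma 1) (q ^ (2 * a)) ↔
      ∃ f : ℕ, Odd f ∧ 1 < f ∧ q ^ f ≡ 1 [MOD p ^ k] ∧
        (∀ g : ℕ, Odd g → 1 < g → q ^ g ≡ 1 [MOD p ^ k] → f ≤ g) ∧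
        f ∣ 2 * a + 1 := by
  haveI : Fact p.Prime := ⟨hp⟩
  have hq1 : 1 ≤ q := hq.one_lt.le
  set o := orderOf ((q : ZMod (p ^ k))) with ho
  -- key : q^f ≡ 1 [MOD p^k] ↔ o ∣ f
  have key : ∀ f : ℕ, (q ^ f ≡ 1 [MOD p ^ k]) ↔ o ∣ f := by
    intro f
    rw [← ZMod.natCast_eq_natCast_iff]
    push_cast
    rw [orderOf_dvd_iff_pow_eq_one]
  have ho1 : o ≠ 1 := by
    intro h
    have hx : (q : ZMod (p ^ k)) = 1 := orderOf_eq_one_iff.mp h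
    have : (q : ZMod (p ^ k)) = ((1 : ℕ) : ZMod (p ^ k)) := by simpa using hx
    rw [ZMod.natCast_eq_natCast_iff] at this
    exact hndvd ((Nat.modEq_iff_dvd' hq1).mp this.symm)
  -- RHS ↔ o ∣ 2a+1
  have hRHS : (∃ f : ℕ, Odd f ∧ 1 < f ∧ q ^ f ≡ 1 [MOD p ^ k] ∧
        (∀ g : ℕ, Odd g → 1 < g → q ^ g ≡ 1 [MOD p ^ k] → f ≤ g) ∧
        f ∣ 2 * a + 1) ↔ o ∣ 2 * a + 1 := by
    constructor
    · rintro ⟨f, _, _, hfm, _, hfd⟩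
      exact dvd_trans ((key f).mp hfm) hfd
    · intro hod
      have hopos : 0 < o := Nat.pos_of_dvd_of_pos hod (by omega)
      have hoodd : Odd o := by
        rcases Nat.even_or_odd o with he | hoo
        · exfalso
          have h2 : (2 : ℕ) ∣ 2 * a + 1 := he.two_dvd.trans hod
          omega
        · exact hoo
      refine ⟨o, hoodd, by omega, (key o).mpr dvd_rfl, ?_, hod⟩
      intro g _ hg1 hgm
      exact Nat.le_of_dvd (by omega) ((key g).mp hgm)
  rw [hRHS]
  -- LHS reduction
  have hsigma : (ArithmeticFunction.sigma 1) (q ^ (2 * a)) =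
      ∑ i ∈ Finset.range (2 * a + 1), q ^ i :=
    ArithmeticFunction.sigma_one_apply_prime_pow hq
  have hLHS : p ∣ (ArithmeticFunction.sigma 1) (q ^ (2 * a)) ↔
      (∑ i ∈ Finset.range (2 * a + 1), ((q : ZMod p)) ^ i) = 0 := by
    rw [hsigma, ← ZMod.natCast_eq_zero_iff]
    push_cast
    rfl
  rw [hLHS]
  rcases Nat.lt_or_ge k 2 with hk2 | hk2
  · -- k = 1
    have hk1 : k = 1 := by omega
    subst hk1
    simp only [pow_one] at hndvd
    have key1 : ∀ f : ℕ, ((q : ZMod p) ^ f = 1) ↔ o ∣ f := by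
      intro f
      rw [← key f, pow_one, ← ZMod.natCast_eq_natCast_iff]
      push_cast
      rfl
    have hx1 : (q : ZMod p) ≠ 1 := by
      intro hx
      have : (q : ZMod p) = ((1 : ℕ) : ZMod p) := by simpa using hx
      rw [ZMod.natCast_eq_natCast_iff] at this
      exact hndvd ((Nat.modEq_iff_dvd' hq1).mp this.symm)
    have hx0 : (q : ZMod p) - 1 ≠ 0 := sub_ne_zero.mpr hx1
    constructor
    · intro h
      have := geom_sum_mul (q : ZMod p) (2 * a + 1)
      rw [h, zero_mul] at this
      have hpow : ((q : ZMod p)) ^ (2 * a + 1) = 1 := by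
        have := this.symm
        rwa [sub_eq_zero] at this
      exact (key1 _).mp hpow
    · intro h
      have hpow : ((q : ZMod p)) ^ (2 * a + 1) = 1 := (key1 _).mpr h
      have := geom_sum_mul (q : ZMod p) (2 * a + 1)
      rw [hpow, sub_self] at this
      rcases mul_eq_zero.mp this with h0 | h0
      · exact h0
      · exact absurd h0 hx0
  · -- k ≥ 2
    have hpq1 : p ∣ q - 1 := dvd_trans (dvd_pow_self p (by omega : k - 1 ≠ 0)) hdvd
    have hx : (q : ZMod p) = 1 := by
      have : (q : ZMod p) = ((1 : ℕ) : ZMod p) := by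
        rw [ZMod.natCast_eq_natCast_iff]
        exact ((Nat.modEq_iff_dvd' hq1).mpr hpq1).symm
      simpa using this
    have hsum : (∑ i ∈ Finset.range (2 * a + 1), ((q : ZMod p)) ^ i)
        = ((2 * a + 1 : ℕ) : ZMod p) := by
      simp [hx]
    rw [hsum, ZMod.natCast_eq_zero_iff]
    -- show o = p
    have hop : o = p := by
      have hqmk : (q : ZMod (p ^ k)) = 1 + ((q - 1 : ℕ) : ZMod (p ^ k)) := by
        have hcast : ((1 + (q - 1) : ℕ) : ZMod (p ^ k)) = 1 + ((q - 1 : ℕ) : ZMod (p ^ k)) := by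
          push_cast
          ring
        rw [← hcast]
        congr 1
        omega
      have h2 : (((q - 1 : ℕ) : ZMod (p ^ k))) ^ 2 = 0 := by
        have hd : p ^ k ∣ (q - 1) ^ 2 := by
          have h1 : p ^ k ∣ p ^ (k - 1) * p ^ (k - 1) := by
            rw [← pow_add]
            exact pow_dvd_pow p (by omega)
          have h2' : p ^ (k - 1) * p ^ (k - 1) ∣ (q - 1) * (q - 1) := mul_dvd_mul hdvd hdvd
          rw [pow_two]
          exact h1.trans h2'
        rw [← Nat.cast_pow, ZMod.natCast_eq_zero_iff]
        exact hd
      have hn : ((p : ℕ) : ZMod (p ^ k)) * ((q - 1 : ℕ) : ZMod (p ^ k)) = 0 := by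
        have hd : p ^ k ∣ p * (q - 1) := by
          have : p ^ k = p * p ^ (k - 1) := by
            rw [← pow_succ']
            congr 1
            omega
          rw [this]
          exact mul_dvd_mul_left p hdvd
        rw [← Nat.cast_mul, ZMod.natCast_eq_zero_iff]
        exact hd
      have hpow : ((q : ZMod (p ^ k))) ^ p = 1 := by
        rw [hqmk]
        exact one_add_pow_eq_one' _ p h2 hn
      have hdvd' : o ∣ p := orderOf_dvd_of_pow_eq_one hpow
      rcases (Nat.Prime.eq_one_or_self_of_dvd hp o hdvd') with h | h
      · exact absurd h ho1
      · exact h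
    rw [hop]
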